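/- Let n ≥ 3, ε ∈ {−1,1}^n and u, v ∈ ℂ. If there exists a nonzero (ε,u,v)-covariant symbol P ∈ ℂ[X_1,…,X_n], then v − u ∈ ℕ. (Scalar case i = j = 0 of the necessary condition in Theorem C(2).) -/

import Mathlib

open scoped BigOperators

noncomputable section

def pd {n : ℕ} {E : Type} [NormedAddCommGroup E] [NormedSpace ℝ E]
    (j : Fin n) (f : (Fin n → ℝ) → E) : (Fin n → ℝ) → E :=
  fun x => fderiv ℝ f x (Pi.single j 1)

def akCoeff (μ : ℂ) (ℓ k : ℕ) : ℂ :=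
  ((-1 : ℂ) ^ k * 2 ^ (ℓ - 2 * k) / (Nat.factorial k * Nat.factorial (ℓ - 2 * k))) *
    ∏ j ∈ Finset.Ico ((ℓ + 1) / 2) (ℓ - k), (μ + (j : ℂ))

def sLap {n : ℕ} (ε : Fin n → ℝ) (i₀ : Fin n) (f : (Fin n → ℝ) → ℂ) : (Fin n → ℝ) → ℂ :=
  fun x => (-(ε i₀ : ℂ)) * ∑ j ∈ Finset.univ.erase i₀, (ε j : ℂ) * pd j (pd j f) x

def juhlOp {n : ℕ} (ε : Fin n → ℝ) (i₀ : Fin n) (μ : ℂ) (ℓ : ℕ)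
    (f : (Fin n → ℝ) → ℂ) : (Fin n → ℝ) → ℂ :=
  fun x => ∑ k ∈ Finset.range (ℓ / 2 + 1),
    akCoeff μ ℓ k * ((sLap ε i₀)^[k] ((pd i₀)^[ℓ - 2 * k] f)) x

def juhlSymbol {n : ℕ} (ε : Fin n → ℝ) (i₀ : Fin n) (μ : ℂ) (ℓ : ℕ) :
    MvPolynomial (Fin n) ℂ :=
  ∑ k ∈ Finset.range (ℓ / 2 + 1),
    MvPolynomial.C (akCoeff μ ℓ k) *
      (MvPolynomial.C (-(ε i₀ : ℂ)) *
        ∑ j ∈ Finset.univ.erase i₀, MvPolynomial.C ((ε j : ℂ)) * MvPolynomial.X j ^ 2) ^ k *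
      MvPolynomial.X i₀ ^ (ℓ - 2 * k)

def monoDiff {n : ℕ} (m : Fin n → ℕ) (f : (Fin n → ℝ) → ℂ) : (Fin n → ℝ) → ℂ :=
  (List.finRange n).foldr (fun j g => (pd j)^[m j] g) f

def polyDiff {n : ℕ} (P : MvPolynomial (Fin n) ℂ) (f : (Fin n → ℝ) → ℂ) :
    (Fin n → ℝ) → ℂ :=
  fun x => ∑ m ∈ P.support, P.coeff m * monoDiff (fun j => m j) f x

def IsConformalKillingPair {n : ℕ} (ε : Fin n → ℝ) (V : Set (Fin n → ℝ))
    (Z : (Fin n → ℝ) → (Fin n → ℝ)) (ρ : (Fin n → ℝ) → ℝ) : Prop :=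
  ContDiffOn ℝ (⊤ : ℕ∞) Z V ∧ ContDiffOn ℝ (⊤ : ℕ∞) ρ V ∧
    ∀ i j : Fin n, ∀ x ∈ V,
      ε i * pd j (fun y => Z y i) x + ε j * pd i (fun y => Z y j) x
        = ρ x * ε i * (if i = j then 1 else 0)

def IsCovariantSymbol {n : ℕ} (ε : Fin n → ℝ) (i₀ : Fin n) (u v : ℂ)
    (P : MvPolynomial (Fin n) ℂ) : Prop :=
  ∀ (Z : (Fin n → ℝ) → (Fin n → ℝ)) (ρ : (Fin n → ℝ) → ℝ),
    IsConformalKillingPair ε Set.univ Z ρ →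
    (∀ x : Fin n → ℝ, x i₀ = 0 → Z x i₀ = 0) →
    ∀ f : (Fin n → ℝ) → ℂ, ContDiff ℝ (⊤ : ℕ∞) f →
    ∀ x : Fin n → ℝ, x i₀ = 0 →
      polyDiff P (fun y => (∑ j, (Z y j : ℂ) * pd j f y) + u / 2 * (ρ y : ℂ) * f y) x
        = (∑ j ∈ Finset.univ.erase i₀, (Z x j : ℂ) * pd j (polyDiff P f) x)
          + v / 2 * (ρ x : ℂ) * polyDiff P f x

def Mon {n : ℕ} (a : Fin n → ℕ) : (Fin n → ℝ) → ℂ :=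
  fun y => ∏ i, ((y i : ℂ)) ^ (a i)

def coordCLM {n : ℕ} (i : Fin n) : (Fin n → ℝ) →L[ℝ] ℂ :=
  Complex.ofRealCLM.comp (ContinuousLinearMap.proj i)

lemma hasFDerivAt_Mon {n : ℕ} (a : Fin n → ℕ) (y : Fin n → ℝ) :
    HasFDerivAt (Mon a)
      (∑ i, ((∏ k ∈ Finset.univ.erase i, ((y k : ℂ)) ^ (a k)) •
        (((a i : ℂ) * (y i : ℂ) ^ (a i - 1)) • coordCLM i))) y := by
  have h := HasFDerivAt.finset_prod (u := Finset.univ)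
    (g := fun i (x : Fin n → ℝ) => ((x i : ℂ)) ^ (a i))
    (g' := fun i => ((a i : ℂ) * (y i : ℂ) ^ (a i - 1)) • coordCLM i)
    (x := y) ?_
  · exact h
  · intro i _
    have h1 : HasFDerivAt (fun x : Fin n → ℝ => ((x i : ℂ))) (coordCLM i) y :=
      (coordCLM i).hasFDerivAt
    have h2 := (hasDerivAt_pow (a i) ((y i : ℂ))).comp_hasFDerivAt y h1
    exact h2

lemma pd_Mon {n : ℕ} (a : Fin n → ℕ) (j : Fin n) :
    pd j (Mon a) = fun y => (a j : ℂ) * Mon (Function.update a j (a j - 1)) y := by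
  funext y
  have H := hasFDerivAt_Mon a y
  show (fderiv ℝ (Mon a) y) (Pi.single j 1) = _
  rw [H.fderiv, ContinuousLinearMap.sum_apply, Finset.sum_eq_single j]
  · have hc : (coordCLM j : (Fin n → ℝ) →L[ℝ] ℂ) (Pi.single j 1) = 1 := by
      simp [coordCLM]
    simp only [ContinuousLinearMap.smul_apply, hc, smul_eq_mul, mul_one]
    rw [Mon, ← Finset.mul_prod_erase (Finset.univ)
      (fun i => ((y i : ℂ)) ^ (Function.update a j (a j - 1) i)) (Finset.mem_univ j)]
    rw [Function.update_self]
    have hprod : ∏ k ∈ Finset.univ.erase j, ((y k : ℂ)) ^ (Function.update a j (a j - 1) k)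
        = ∏ k ∈ Finset.univ.erase j, ((y k : ℂ)) ^ (a k) :=
      Finset.prod_congr rfl (fun k hk => by
        rw [Function.update_of_ne (Finset.ne_of_mem_erase hk)])
    rw [hprod]
    ring
  · intro i _ hij
    have hc : (coordCLM i : (Fin n → ℝ) →L[ℝ] ℂ) (Pi.single j 1) = 0 := by
      simp [coordCLM, Pi.single_apply, hij]
    simp [hc]
  · intro h; exact absurd (Finset.mem_univ j) h

lemma contDiff_coord {n : ℕ} (i : Fin n) :
    ContDiff ℝ (⊤ : ℕ∞) (fun x : Fin n → ℝ => ((x i : ℂ))) :=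
  Complex.ofRealCLM.contDiff.comp ((ContinuousLinearMap.proj i :
    (Fin n → ℝ) →L[ℝ] ℝ)).contDiff

lemma contDiff_Mon {n : ℕ} (a : Fin n → ℕ) : ContDiff ℝ (⊤ : ℕ∞) (Mon a) :=
  contDiff_prod (fun i _ => (contDiff_coord i).pow (a i))

lemma differentiable_Mon {n : ℕ} (a : Fin n → ℕ) : Differentiable ℝ (Mon a) :=
  (contDiff_Mon a).differentiable (by simp)

def cmon {n : ℕ} (c : ℂ) (a : Fin n → ℕ) : (Fin n → ℝ) → ℂ := fun y => c * Mon a y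

lemma pd_cmon {n : ℕ} (c : ℂ) (a : Fin n → ℕ) (j : Fin n) :
    pd j (cmon c a) = cmon (c * (a j : ℂ)) (Function.update a j (a j - 1)) := by
  funext y
  have h : pd j (cmon c a) y = c * pd j (Mon a) y := by
    show (fderiv ℝ (fun y => c * Mon a y) y) (Pi.single j 1) = _
    rw [fderiv_const_mul (differentiable_Mon a y) c]
    rfl
  rw [h, pd_Mon]
  show c * ((a j : ℂ) * Mon (Function.update a j (a j - 1)) y) = _
  rw [cmon]; ring

def descC (b k : ℕ) : ℂ := ∏ t ∈ Finset.range k, ((b - t : ℕ) : ℂ)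

lemma iter_pd_cmon {n : ℕ} (c : ℂ) (a : Fin n → ℕ) (j : Fin n) (k : ℕ) :
    (pd j)^[k] (cmon c a) = cmon (c * descC (a j) k) (Function.update a j (a j - k)) := by
  induction k with
  | zero =>
    simp only [Function.iterate_zero, id_eq, descC, Finset.range_zero, Finset.prod_empty,
      mul_one, Nat.sub_zero, Function.update_eq_self]
  | succ k ih =>
    rw [Function.iterate_succ_apply', ih, pd_cmon]
    have h1 : Function.update a j (a j - k) j = a j - k := Function.update_self j _ a
    rw [Function.update_idem, h1]
    have h2 : a j - k - 1 = a j - (k + 1) := by omega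
    have h3 : descC (a j) k * ((a j - k : ℕ) : ℂ) = descC (a j) (k + 1) := by
      rw [descC, descC, Finset.prod_range_succ]
    rw [h2, mul_assoc, h3]

lemma foldr_cmon {n : ℕ} (m : Fin n → ℕ) (L : List (Fin n)) (hL : L.Nodup)
    (c : ℂ) (a : Fin n → ℕ) :
    L.foldr (fun j g => (pd j)^[m j] g) (cmon c a)
      = cmon (c * ∏ j ∈ L.toFinset, descC (a j) (m j))
          (fun i => if i ∈ L.toFinset then a i - m i else a i) := by
  induction L with
  | nil => simp [cmon]
  | cons j L ih =>
    have hnd := List.nodup_cons.mp hL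
    rw [List.foldr_cons, ih hnd.2, iter_pd_cmon]
    have hj : j ∉ L.toFinset := by simpa using hnd.1
    have hfj : (if j ∈ L.toFinset then a j - m j else a j) = a j := by simp [hj]
    rw [hfj]
    have hfun : Function.update (fun i => if i ∈ L.toFinset then a i - m i else a i) j
        (a j - m j) = fun i => if i ∈ (j :: L).toFinset then a i - m i else a i := by
      funext i
      by_cases hij : i = j
      · subst hij
        rw [Function.update_self]
        simp
      · rw [Function.update_of_ne hij]
        simp only [List.toFinset_cons, Finset.mem_insert, hij, false_or]
    rw [hfun]
    congr 1
    rw [List.toFinset_cons, Finset.prod_insert hj]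
    ring

lemma monoDiff_cmon {n : ℕ} (m : Fin n → ℕ) (c : ℂ) (a : Fin n → ℕ) :
    monoDiff m (cmon c a)
      = cmon (c * ∏ j, descC (a j) (m j)) (fun i => a i - m i) := by
  rw [monoDiff, foldr_cmon m _ (List.nodup_finRange n)]
  simp [List.toFinset_finRange]

lemma Mon_zero_eq_one {n : ℕ} {b : Fin n → ℕ} (hb : ∀ i, b i = 0) : Mon b (0 : Fin n → ℝ) = 1 := by
  rw [Mon]
  apply Finset.prod_eq_one
  intro i _
  rw [hb i, pow_zero]

lemma Mon_zero_eq_zero {n : ℕ} {b : Fin n → ℕ} {i : Fin n} (hb : b i ≠ 0) :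
    Mon b (0 : Fin n → ℝ) = 0 := by
  rw [Mon]
  apply Finset.prod_eq_zero (Finset.mem_univ i)
  simp [zero_pow hb]

lemma descC_self (b : ℕ) : descC b b = (Nat.factorial b : ℂ) := by
  have h : ∀ b : ℕ, ∏ t ∈ Finset.range b, (b - t) = Nat.factorial b := by
    intro b
    induction b with
    | zero => simp
    | succ b ih =>
      rw [Finset.prod_range_succ']
      simp only [Nat.succ_sub_succ_eq_sub, Nat.sub_zero]
      rw [ih, Nat.factorial_succ, mul_comm]
  rw [descC, ← h b]
  push_cast
  rfl

lemma descC_zero_of_lt {b k : ℕ} (h : b < k) : descC b k = 0 := by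
  apply Finset.prod_eq_zero (Finset.mem_range.mpr h)
  simp

lemma monoDiff_cmon_zero_self {n : ℕ} (c : ℂ) (a : Fin n → ℕ) :
    monoDiff a (cmon c a) (0 : Fin n → ℝ) = c * ∏ j, (Nat.factorial (a j) : ℂ) := by
  rw [monoDiff_cmon, cmon]
  rw [Mon_zero_eq_one (fun i => by omega)]
  rw [Finset.prod_congr rfl (fun j _ => descC_self (a j))]
  ring

lemma monoDiff_cmon_zero_ne {n : ℕ} (c : ℂ) (a m : Fin n → ℕ) (hne : m ≠ a) :
    monoDiff m (cmon c a) (0 : Fin n → ℝ) = 0 := by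
  rw [monoDiff_cmon, cmon]
  obtain ⟨j, hj⟩ : ∃ j, m j ≠ a j := by
    by_contra h
    push_neg at h
    exact hne (funext h)
  rcases lt_or_gt_of_ne hj with h | h
  · -- m j < a j : exponent a j - m j ≠ 0
    rw [Mon_zero_eq_zero (i := j) (by omega)]
    ring
  · -- a j < m j : descC factor is 0
    rw [Finset.prod_eq_zero (Finset.mem_univ j) (descC_zero_of_lt h)]
    ring

lemma polyDiff_cmon_zero {n : ℕ} (P : MvPolynomial (Fin n) ℂ) (c : ℂ) (m₀ : Fin n →₀ ℕ) :
    polyDiff P (cmon c (fun j => m₀ j)) (0 : Fin n → ℝ)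
      = P.coeff m₀ * (c * ∏ j, (Nat.factorial (m₀ j) : ℂ)) := by
  rw [polyDiff]
  rw [Finset.sum_eq_single m₀]
  · rw [monoDiff_cmon_zero_self]
  · intro m _ hm
    rw [monoDiff_cmon_zero_ne c _ _ (fun h => hm ((DFunLike.coe_injective (F := Fin n →₀ ℕ)) h))]
    ring
  · intro h
    rw [MvPolynomial.notMem_support_iff.mp h]
    ring

lemma mul_Mon_update {n : ℕ} (a : Fin n → ℕ) (j : Fin n) (y : Fin n → ℝ) (h : a j ≠ 0) :
    (y j : ℂ) * Mon (Function.update a j (a j - 1)) y = Mon a y := by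
  rw [Mon, Mon]
  rw [← Finset.mul_prod_erase (Finset.univ)
    (fun i => ((y i : ℂ)) ^ (Function.update a j (a j - 1) i)) (Finset.mem_univ j)]
  rw [← Finset.mul_prod_erase (Finset.univ)
    (fun i => ((y i : ℂ)) ^ (a i)) (Finset.mem_univ j)]
  have hprod : ∏ k ∈ Finset.univ.erase j, ((y k : ℂ)) ^ (Function.update a j (a j - 1) k)
      = ∏ k ∈ Finset.univ.erase j, ((y k : ℂ)) ^ (a k) :=
    Finset.prod_congr rfl (fun k hk => by
      rw [Function.update_of_ne (Finset.ne_of_mem_erase hk)])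
  rw [hprod, Function.update_self, ← mul_assoc]
  congr 1
  rw [← pow_succ']
  congr 1
  omega

lemma coord_mul_pd_Mon {n : ℕ} (a : Fin n → ℕ) (j : Fin n) (y : Fin n → ℝ) :
    (y j : ℂ) * pd j (Mon a) y = (a j : ℂ) * Mon a y := by
  rw [pd_Mon]
  by_cases h : a j = 0
  · simp [h]
  · rw [show (y j : ℂ) * ((a j : ℂ) * Mon (Function.update a j (a j - 1)) y)
        = (a j : ℂ) * ((y j : ℂ) * Mon (Function.update a j (a j - 1)) y) by ring,
      mul_Mon_update a j y h]

lemma pd_proj {n : ℕ} (i j : Fin n) :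
    pd j (fun y : Fin n → ℝ => y i) = fun _ => if i = j then (1 : ℝ) else 0 := by
  funext x
  show fderiv ℝ (⇑(ContinuousLinearMap.proj i : (Fin n → ℝ) →L[ℝ] ℝ)) x (Pi.single j 1) = _
  rw [(ContinuousLinearMap.proj i : (Fin n → ℝ) →L[ℝ] ℝ).fderiv]
  simp [Pi.single_apply]

lemma euler_killing {n : ℕ} (ε : Fin n → ℝ) :
    IsConformalKillingPair ε Set.univ (fun y => y) (fun _ => 2) := by
  refine ⟨contDiff_id.contDiffOn, contDiffOn_const, ?_⟩
  intro i j x _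
  rw [pd_proj i j, pd_proj j i]
  by_cases h : i = j
  · subst h; simp; ring
  · simp [h, Ne.symm h]

theorem stmt1 (n : ℕ) (hn : 3 ≤ n) (ε : Fin n → ℝ) (hε : ∀ j, ε j = 1 ∨ ε j = -1)
    (u v : ℂ) (P : MvPolynomial (Fin n) ℂ) (hP : P ≠ 0)
    (hcov : IsCovariantSymbol ε ⟨n - 1, by omega⟩ u v P) :
    ∃ ℓ : ℕ, v - u = ℓ := by
  obtain ⟨m₀, hm₀⟩ := (MvPolynomial.support_nonempty (p := P)).mpr hP
  set a : Fin n → ℕ := fun j => m₀ j with ha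
  set N : ℕ := ∑ j, a j with hN
  have hcoeff : P.coeff m₀ ≠ 0 := MvPolynomial.mem_support_iff.mp hm₀
  have key := hcov (fun y => y) (fun _ => 2) (euler_killing ε) (fun x h => h)
    (Mon a) (contDiff_Mon a) 0 rfl
  -- simplify the LHS function
  have hfun : (fun y : Fin n → ℝ =>
      (∑ j, ((y j : ℂ)) * pd j (Mon a) y) + u / 2 * (((2 : ℝ) : ℂ)) * Mon a y)
      = cmon ((N : ℂ) + u) a := by
    funext y
    rw [Finset.sum_congr rfl (fun j _ => coord_mul_pd_Mon a j y), ← Finset.sum_mul]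
    rw [cmon, hN]
    push_cast
    ring
  rw [hfun] at key
  have hMon : Mon a = cmon 1 a := funext fun y => (one_mul _).symm
  rw [hMon] at key
  rw [polyDiff_cmon_zero, polyDiff_cmon_zero] at key
  have hzero : ∀ j ∈ Finset.univ.erase (⟨n - 1, by omega⟩ : Fin n),
      (((0 : Fin n → ℝ) j : ℂ)) * pd j (polyDiff P (cmon 1 a)) 0 = 0 := by
    intro j _
    simp
  rw [Finset.sum_congr rfl hzero, Finset.sum_const_zero, zero_add] at key
  have hF : (∏ j, (Nat.factorial (m₀ j) : ℂ)) ≠ 0 := by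
    rw [Finset.prod_ne_zero_iff]
    intro j _
    exact_mod_cast Nat.factorial_ne_zero (m₀ j)
  have hkey2 : ((N : ℂ) + u) * (P.coeff m₀ * ∏ j, (Nat.factorial (m₀ j) : ℂ))
      = v * (P.coeff m₀ * ∏ j, (Nat.factorial (m₀ j) : ℂ)) := by
    norm_num at key
    linear_combination key
  have := mul_right_cancel₀ (mul_ne_zero hcoeff hF) hkey2
  exact ⟨N, by rw [← this]; ring⟩
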